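/- Let Y be an integrable real-valued random variable with cumulative distribution function F(s) = P(Y ≤ s), and let τ ∈ (0,1). Then for all real numbers q and a, E[ρ_τ(Y − a)] − E[ρ_τ(Y − q)] = ∫_q^a (F(s) − τ) ds. -/

import Mathlib

open MeasureTheory Set

lemma rho_eq (τ v : ℝ) : v * (τ - if v < 0 then (1:ℝ) else 0) = τ * v + max (-v) 0 := by
  rcases lt_or_ge v 0 with h | h
  · rw [if_pos h, max_eq_left (by linarith)]; ring
  · rw [if_neg (not_lt.mpr h), max_eq_right (by linarith)]; ring

lemma inner_calc {q a : ℝ} (hqa : q ≤ a) (y : ℝ) :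
    ∫ s in Ioc q a, (if y ≤ s then (1:ℝ) else 0)
      = max (a - y) 0 - max (q - y) 0 := by
  have h1 : ∀ s, (if y ≤ s then (1:ℝ) else 0) = (Ici y).indicator (fun _ => (1:ℝ)) s := by
    intro s; simp [Set.indicator_apply]
  simp only [h1]
  rw [setIntegral_indicator measurableSet_Ici]
  rcases le_or_gt y q with h | h
  · have h2 : Ioc q a ∩ Ici y = Ioc q a := by
      apply inter_eq_left.mpr
      intro s hs
      exact le_trans h (le_of_lt hs.1)
    rw [h2, setIntegral_const, measureReal_def, Real.volume_Ioc, smul_eq_mul, mul_one,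
      ENNReal.toReal_ofReal (by linarith), max_eq_left (by linarith),
      max_eq_left (by linarith)]
    ring
  · have h2 : Ioc q a ∩ Ici y = Icc y a := by
      ext s
      simp only [mem_inter_iff, mem_Ioc, mem_Ici, mem_Icc]
      constructor
      · rintro ⟨⟨_, h2⟩, h3⟩; exact ⟨h3, h2⟩
      · rintro ⟨h1', h2⟩; exact ⟨⟨by linarith, h2⟩, h1'⟩
    rw [h2, setIntegral_const, measureReal_def, Real.volume_Icc, smul_eq_mul, mul_one]
    rcases le_or_gt y a with h' | h'
    · rw [ENNReal.toReal_ofReal (by linarith), max_eq_left (by linarith),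
        max_eq_right (by linarith)]
      ring
    · rw [ENNReal.ofReal_eq_zero.mpr (by linarith), ENNReal.toReal_zero,
        max_eq_right (by linarith), max_eq_right (by linarith)]
      ring

lemma key {Ω : Type*} [MeasurableSpace Ω] (P : Measure Ω) [IsProbabilityMeasure P]
    (Y : Ω → ℝ) (hY : Integrable Y P) {q a : ℝ} (hqa : q ≤ a) :
    (∫ ω, max (a - Y ω) 0 ∂P) - (∫ ω, max (q - Y ω) 0 ∂P)
      = ∫ s in Ioc q a, (P {ω | Y ω ≤ s}).toReal := by
  have ia : Integrable (fun ω => max (a - Y ω) 0) P :=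
    ((integrable_const a).sub hY).pos_part
  have iq : Integrable (fun ω => max (q - Y ω) 0) P :=
    ((integrable_const q).sub hY).pos_part
  rw [← integral_sub ia iq]
  -- replace Y by a measurable representative
  obtain ⟨Y', hY'm, hY'⟩ := hY.aestronglyMeasurable
  have hY'meas : Measurable Y' := hY'm.measurable
  have step1 : ∫ ω, (max (a - Y ω) 0 - max (q - Y ω) 0) ∂P
      = ∫ ω, (∫ s in Ioc q a, (if Y' ω ≤ s then (1:ℝ) else 0)) ∂P := by
    apply integral_congr_ae
    filter_upwards [hY'] with ω hω
    rw [inner_calc hqa, hω]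
  rw [step1]
  -- Fubini
  have hint : Integrable (Function.uncurry fun (ω : Ω) (s : ℝ) =>
      (if Y' ω ≤ s then (1:ℝ) else 0)) (P.prod (volume.restrict (Ioc q a))) := by
    have hM : MeasurableSet {p : Ω × ℝ | Y' p.1 ≤ p.2} :=
      measurableSet_le (hY'meas.comp measurable_fst) measurable_snd
    have hsm : AEStronglyMeasurable (Function.uncurry fun (ω : Ω) (s : ℝ) =>
        (if Y' ω ≤ s then (1:ℝ) else 0)) (P.prod (volume.restrict (Ioc q a))) := by
      apply Measurable.aestronglyMeasurable
      exact Measurable.ite hM measurable_const measurable_const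
    refine ⟨hsm, ?_⟩
    apply (hasFiniteIntegral_const (1:ℝ)).mono'
    filter_upwards with p
    obtain ⟨ω, s⟩ := p
    simp only [Function.uncurry_apply_pair]
    split <;> simp
  rw [integral_integral_swap hint]
  apply integral_congr_ae
  filter_upwards with s
  have h1 : ∀ ω, (if Y' ω ≤ s then (1:ℝ) else 0)
      = ({ω | Y' ω ≤ s}).indicator (1 : Ω → ℝ) ω := by
    intro ω; simp [Set.indicator_apply]
  simp only [h1]
  rw [integral_indicator_one
    (show MeasurableSet {ω | Y' ω ≤ s} from hY'meas measurableSet_Iic)]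
  rw [measureReal_def]
  congr 1
  apply measure_congr
  filter_upwards [hY'] with ω hω
  simp only [eq_iff_iff]
  change Y' ω ≤ s ↔ Y ω ≤ s
  rw [hω]

lemma key2 {Ω : Type*} [MeasurableSpace Ω] (P : Measure Ω) [IsProbabilityMeasure P]
    (Y : Ω → ℝ) (hY : Integrable Y P) (τ : ℝ) {q a : ℝ} (hqa : q ≤ a) :
    (∫ ω, (Y ω - a) * (τ - if (Y ω - a) < 0 then (1 : ℝ) else 0) ∂P)
      - (∫ ω, (Y ω - q) * (τ - if (Y ω - q) < 0 then (1 : ℝ) else 0) ∂P)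
      = ∫ s in q..a, ((P {ω | Y ω ≤ s}).toReal - τ) := by
  have e1 : ∀ c : ℝ, (∫ ω, (Y ω - c) * (τ - if (Y ω - c) < 0 then (1 : ℝ) else 0) ∂P)
      = τ * ((∫ ω, Y ω ∂P) - c) + ∫ ω, max (c - Y ω) 0 ∂P := by
    intro c
    have : ∀ ω, (Y ω - c) * (τ - if (Y ω - c) < 0 then (1 : ℝ) else 0)
        = τ * (Y ω - c) + max (c - Y ω) 0 := by
      intro ω; rw [rho_eq]; ring_nf
    simp only [this]
    have i1 : Integrable (fun ω => τ * (Y ω - c)) P := by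
      exact (hY.sub (integrable_const c)).const_mul τ
    have i2 : Integrable (fun ω => max (c - Y ω) 0) P := by
      exact ((integrable_const c).sub hY).pos_part
    rw [integral_add i1 i2, integral_const_mul]
    have i3 : Integrable (fun ω => Y ω - c) P := by
      exact hY.sub (integrable_const c)
    rw [show (∫ ω, Y ω - c ∂P) = ∫ ω, Y ω ∂P - c from by
      rw [integral_sub hY (integrable_const c)]; simp]
  rw [e1, e1]
  have hF : Monotone (fun s => (P {ω | Y ω ≤ s}).toReal) := by
    intro s t hst
    exact ENNReal.toReal_mono (measure_ne_top _ _)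
      (measure_mono (fun ω h => le_trans h hst))
  have hFi : IntervalIntegrable (fun s => (P {ω | Y ω ≤ s}).toReal) volume q a :=
    hF.intervalIntegrable
  rw [intervalIntegral.integral_sub hFi intervalIntegrable_const,
    intervalIntegral.integral_const, intervalIntegral.integral_of_le hqa]
  rw [← key P Y hY hqa]
  simp only [smul_eq_mul]
  ring

/-- if `Y` is an integrable real random variable with CDF
`F(s) = P(Y ≤ s)` and `τ ∈ (0,1)`, then for all reals `q, a`,
`E[ρ_τ(Y − a)] − E[ρ_τ(Y − q)] = ∫_q^a (F(s) − τ) ds`,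
where `ρ_τ(v) = v·(τ − 1{v < 0})`. -/
theorem expected_check_loss_difference
    {Ω : Type*} [MeasurableSpace Ω] (P : Measure Ω) [IsProbabilityMeasure P]
    (Y : Ω → ℝ) (hY : Integrable Y P) (τ : ℝ) (hτ0 : 0 < τ) (hτ1 : τ < 1) (q a : ℝ) :
    (∫ ω, (Y ω - a) * (τ - if (Y ω - a) < 0 then (1 : ℝ) else 0) ∂P)
      - (∫ ω, (Y ω - q) * (τ - if (Y ω - q) < 0 then (1 : ℝ) else 0) ∂P)
      = ∫ s in q..a, ((P {ω | Y ω ≤ s}).toReal - τ) := by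
  rcases le_total q a with h | h
  · exact key2 P Y hY τ h
  · have := key2 P Y hY τ h
    rw [intervalIntegral.integral_symm]
    linarith
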